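/- In the universal enveloping algebra A = U(sl_2 ⋉ k^2), where sl_2 has basis e,f,h and k^2 has basis x,y with [e,x]=0, [e,y]=x, [f,x]=y, [f,y]=0, [h,x]=x, [h,y]=-y, [x,y]=0, the element t = e y^2 + h x y - f x^2 is central in A. -/

import Mathlib

set_option maxHeartbeats 1000000

section
attribute [local instance] LieRing.ofAssociativeRing

theorem lieMulAux {A : Type} [Ring A] (a b c : A) : ⁅a, b*c⁆ = ⁅a,b⁆*c + b*⁅a,c⁆ := by
  simp only [Ring.lie_def]; noncomm_ring

end

theorem stmt2 {k : Type} [Field k] [CharZero k] {A : Type} [Ring A] [Algebra k A]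
    (ee ff hh xx yy : A)
    (hHE : ⁅hh, ee⁆ = 2*ee) (hHF : ⁅hh, ff⁆ = -(2*ff)) (hEF : ⁅ee, ff⁆ = hh)
    (hEX : ⁅ee, xx⁆ = 0) (hEY : ⁅ee, yy⁆ = xx)
    (hFX : ⁅ff, xx⁆ = yy) (hFY : ⁅ff, yy⁆ = 0)
    (hHX : ⁅hh, xx⁆ = xx) (hHY : ⁅hh, yy⁆ = -yy)
    (hXY : ⁅xx, yy⁆ = 0)
    (hgen : Algebra.adjoin k ({ee, ff, hh, xx, yy} : Set A) = ⊤)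
    (hPBW : LinearIndependent k (fun m : Fin 5 → ℕ =>
      ee ^ m 0 * ff ^ m 1 * hh ^ m 2 * xx ^ m 3 * yy ^ m 4)) :
    ee * yy^2 + hh * (xx * yy) - ff * xx^2 ∈ Subalgebra.center k A := by
  letI : LieRing A := LieRing.ofAssociativeRing
  have hEH : ⁅ee, hh⁆ = -(2*ee) := by rw [← lie_skew, hHE]
  have hFE : ⁅ff, ee⁆ = -hh := by rw [← lie_skew, hEF]
  have hFH : ⁅ff, hh⁆ = 2*ff := by rw [← lie_skew, hHF, neg_neg]
  have hXE : ⁅xx, ee⁆ = 0 := by rw [← lie_skew, hEX]; simp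
  have hXH : ⁅xx, hh⁆ = -xx := by rw [← lie_skew, hHX]
  have hXF : ⁅xx, ff⁆ = -yy := by rw [← lie_skew, hFX]
  have hYE : ⁅yy, ee⁆ = -xx := by rw [← lie_skew, hEY]
  have hYH : ⁅yy, hh⁆ = yy := by rw [← lie_skew, hHY, neg_neg]
  have hYF : ⁅yy, ff⁆ = 0 := by rw [← lie_skew, hFY]; simp
  have hYX : ⁅yy, xx⁆ = 0 := by rw [← lie_skew, hXY]; simp
  have hXY2 : ∀ a : A, xx * (yy * a) = yy * (xx * a) := by
    intro a; rw [← mul_assoc, ← mul_assoc, ← sub_eq_zero, ← sub_mul, ← Ring.lie_def, hXY, zero_mul]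
  have hXY' : xx * yy = yy * xx := by rw [← sub_eq_zero, ← Ring.lie_def, hXY]
  have hEX' : ee * xx = xx * ee := by rw [← sub_eq_zero, ← Ring.lie_def, hEX]
  have hFY' : ff * yy = yy * ff := by rw [← sub_eq_zero, ← Ring.lie_def, hFY]
  set t : A := ee * yy^2 + hh * (xx * yy) - ff * xx^2 with ht
  have ce : ⁅ee, t⁆ = 0 := by
    simp only [ht, pow_two, lie_add, lie_sub, lieMulAux, lie_self, hEH, hEY, hEX, hEF, hXY]
    rw [← sub_eq_zero]; noncomm_ring; simp only [mul_assoc, hXY', hXY2]; abel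
  have cf : ⁅ff, t⁆ = 0 := by
    simp only [ht, pow_two, lie_add, lie_sub, lieMulAux, lie_self, hFE, hFH, hFX, hFY]
    rw [← sub_eq_zero]; noncomm_ring; simp only [mul_assoc, hXY', hXY2]; abel
  have ch : ⁅hh, t⁆ = 0 := by
    simp only [ht, pow_two, lie_add, lie_sub, lieMulAux, lie_self, hHE, hHF, hHX, hHY]
    rw [← sub_eq_zero]; noncomm_ring
  have cx : ⁅xx, t⁆ = 0 := by
    simp only [ht, pow_two, lie_add, lie_sub, lieMulAux, lie_self, hXE, hXH, hXF, hXY]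
    rw [← sub_eq_zero]; noncomm_ring; simp only [mul_assoc, hXY', hXY2]; abel
  have cy : ⁅yy, t⁆ = 0 := by
    simp only [ht, pow_two, lie_add, lie_sub, lieMulAux, lie_self, hYE, hYH, hYF, hYX]
    rw [← sub_eq_zero]; noncomm_ring; simp only [mul_assoc, hXY', hXY2]; abel
  rw [Subalgebra.mem_center_iff]
  intro b
  have hb : b ∈ Algebra.adjoin k ({ee, ff, hh, xx, yy} : Set A) := by
    rw [hgen]; trivial
  induction hb using Algebra.adjoin_induction with
  | mem g hg =>
    have : ⁅g, t⁆ = 0 := by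
      rcases hg with rfl | rfl | rfl | rfl | rfl
      exacts [ce, cf, ch, cx, cy]
    rw [Ring.lie_def, sub_eq_zero] at this
    exact this
  | algebraMap r => exact Algebra.commutes r t
  | add a b _ _ ha hb => rw [add_mul, mul_add, ha, hb]
  | mul a b _ _ ha hb => rw [mul_assoc, hb, ← mul_assoc, ha, mul_assoc]
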